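/- Let $S$ be a polynomial ring over a field and let $I_1,\ldots,I_r\subset S$ be ideals generated by polynomials in pairwise disjoint sets of variables $X_1,\ldots,X_r$. Fix a monomial order $<$ on $S$. Then $\mathrm{in}_<(I_1+\cdots+I_r)=\mathrm{in}_<(I_1)+\cdots+\mathrm{in}_<(I_r)$. -/

import Mathlib

open MvPolynomial

/-- The leading exponent (degree) of a polynomial with respect to a monomial order. -/
noncomputable def leadDegree {K σ : Type} [Field K] (mo : MonomialOrder σ)
    (f : MvPolynomial σ K) : σ →₀ ℕ :=
  mo.toSyn.symm (f.support.sup fun d => mo.toSyn d)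

/-- The initial ideal of `I` with respect to a monomial order: the ideal generated by
the leading monomials of the nonzero elements of `I`. -/
noncomputable def initialIdeal {K σ : Type} [Field K] (mo : MonomialOrder σ)
    (I : Ideal (MvPolynomial σ K)) : Ideal (MvPolynomial σ K) :=
  Ideal.span {g | ∃ f ∈ I, f ≠ 0 ∧ g = monomial (leadDegree mo f) (1 : K)}

set_option maxHeartbeats 1000000

section Lemmas

variable {K σ : Type} [Field K] (mo : MonomialOrder σ)

lemma toSyn_leadDegree (f : MvPolynomial σ K) :
    mo.toSyn (leadDegree mo f) = f.support.sup fun d => mo.toSyn d := by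
  simp [leadDegree]

lemma le_toSyn_leadDegree {f : MvPolynomial σ K} {d} (hd : coeff d f ≠ 0) :
    mo.toSyn d ≤ mo.toSyn (leadDegree mo f) := by
  rw [toSyn_leadDegree]
  exact Finset.le_sup (mem_support_iff.2 hd)

lemma leadDegree_zero : leadDegree mo (0 : MvPolynomial σ K) = 0 := by
  simp [leadDegree]

lemma coeff_leadDegree_ne_zero {f : MvPolynomial σ K} (hf : f ≠ 0) :
    coeff (leadDegree mo f) f ≠ 0 := by
  obtain ⟨d, hd, he⟩ := Finset.exists_mem_eq_sup f.support
    (support_nonempty.2 hf) (fun d => mo.toSyn d)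
  have : leadDegree mo f = d := by
    apply mo.toSyn.injective
    rw [toSyn_leadDegree, he]
  rw [this]
  exact mem_support_iff.1 hd

lemma coeff_eq_zero_of_lt {f : MvPolynomial σ K} {d}
    (h : mo.toSyn (leadDegree mo f) < mo.toSyn d) : coeff d f = 0 := by
  by_contra hc
  exact absurd (le_toSyn_leadDegree mo hc) (not_le.2 h)

lemma leadDegree_le_of {f : MvPolynomial σ K} {T : mo.syn}
    (h : ∀ d, coeff d f ≠ 0 → mo.toSyn d ≤ T) :
    mo.toSyn (leadDegree mo f) ≤ T := by
  rw [toSyn_leadDegree]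
  exact Finset.sup_le fun d hd => h d (mem_support_iff.1 hd)

lemma leadDegree_eq_of {f : MvPolynomial σ K} {δ : σ →₀ ℕ}
    (h0 : coeff δ f ≠ 0) (h : ∀ d, coeff d f ≠ 0 → mo.toSyn d ≤ mo.toSyn δ) :
    leadDegree mo f = δ := by
  apply mo.toSyn.injective
  exact le_antisymm (leadDegree_le_of mo h) (le_toSyn_leadDegree mo h0)

lemma zero_le_syn (T : mo.syn) : (0 : mo.syn) ≤ T := by
  rw [← mo.bot_eq_zero]; exact bot_le

lemma toSyn_leadDegree_zero_le {f : MvPolynomial σ K} {T : mo.syn}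
    (hf : f = 0) : mo.toSyn (leadDegree mo f) ≤ T := by
  rw [hf, leadDegree_zero, map_zero]; exact zero_le_syn mo T

/-- coefficient of the product at the sum of lead degrees -/
lemma coeff_mul_leadDegree (f g : MvPolynomial σ K) :
    coeff (leadDegree mo f + leadDegree mo g) (f * g)
      = coeff (leadDegree mo f) f * coeff (leadDegree mo g) g := by
  classical
  rw [coeff_mul]
  apply Finset.sum_eq_single_of_mem (leadDegree mo f, leadDegree mo g)
    (Finset.HasAntidiagonal.mem_antidiagonal.mpr rfl)
  rintro ⟨x, y⟩ hxy hne
  rw [Finset.HasAntidiagonal.mem_antidiagonal] at hxy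
  by_contra hc
  have hx : coeff x f ≠ 0 := fun h => hc (by simp only at hc ⊢; rw [h, zero_mul])
  have hy : coeff y g ≠ 0 := fun h => hc (by simp only at hc ⊢; rw [h, mul_zero])
  have hx' := le_toSyn_leadDegree mo hx
  have hy' := le_toSyn_leadDegree mo hy
  have hsum : mo.toSyn x + mo.toSyn y
      = mo.toSyn (leadDegree mo f) + mo.toSyn (leadDegree mo g) := by
    rw [← map_add, ← map_add]
    exact congrArg _ hxy
  have hxe : mo.toSyn x = mo.toSyn (leadDegree mo f) := by
    by_contra hxe
    have : mo.toSyn x + mo.toSyn y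
        < mo.toSyn (leadDegree mo f) + mo.toSyn (leadDegree mo g) :=
      add_lt_add_of_lt_of_le (lt_of_le_of_ne hx' hxe) hy'
    exact absurd hsum (ne_of_lt this)
  have hye : mo.toSyn y = mo.toSyn (leadDegree mo g) := by
    have h2 := hsum
    rw [hxe] at h2
    exact add_left_cancel h2
  exact hne (Prod.ext (mo.toSyn.injective hxe) (mo.toSyn.injective hye))

lemma leadDegree_mul {f g : MvPolynomial σ K} (hf : f ≠ 0) (hg : g ≠ 0) :
    leadDegree mo (f * g) = leadDegree mo f + leadDegree mo g := by
  classical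
  apply leadDegree_eq_of
  · rw [coeff_mul_leadDegree]
    exact mul_ne_zero (coeff_leadDegree_ne_zero mo hf) (coeff_leadDegree_ne_zero mo hg)
  · intro d hd
    have hd' := MvPolynomial.support_mul f g (mem_support_iff.2 hd)
    rw [Finset.mem_add] at hd'
    obtain ⟨a, ha, b, hb, rfl⟩ := hd'
    rw [map_add, map_add]
    exact add_le_add (le_toSyn_leadDegree mo (mem_support_iff.1 ha))
      (le_toSyn_leadDegree mo (mem_support_iff.1 hb))

lemma leadDegree_sub_lt {a t : MvPolynomial σ K} {δ : σ →₀ ℕ} (hδ : δ ≠ 0)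
    (ha : mo.toSyn (leadDegree mo a) ≤ mo.toSyn δ)
    (ht : mo.toSyn (leadDegree mo t) ≤ mo.toSyn δ)
    (hc : coeff δ a = coeff δ t) :
    mo.toSyn (leadDegree mo (a - t)) < mo.toSyn δ := by
  have hδ' : (0 : mo.syn) < mo.toSyn δ := by
    refine lt_of_le_of_ne (zero_le_syn mo _) (fun h => hδ ?_)
    apply mo.toSyn.injective
    rw [map_zero, ← h]
  rcases eq_or_ne (a - t) 0 with h0 | h0
  · rw [h0, leadDegree_zero, map_zero]
    exact hδ'
  · have hle : mo.toSyn (leadDegree mo (a - t)) ≤ mo.toSyn δ := by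
      apply leadDegree_le_of
      intro d hd
      by_contra hgt
      push_neg at hgt
      have h1 : coeff d a = 0 := coeff_eq_zero_of_lt mo (lt_of_le_of_lt ha hgt)
      have h2 : coeff d t = 0 := coeff_eq_zero_of_lt mo (lt_of_le_of_lt ht hgt)
      rw [coeff_sub, h1, h2, sub_zero] at hd
      exact hd rfl
    refine lt_of_le_of_ne hle (fun heq => ?_)
    have hdd : leadDegree mo (a - t) = δ := mo.toSyn.injective heq
    have := coeff_leadDegree_ne_zero mo h0
    rw [hdd, coeff_sub, hc, sub_self] at this
    exact this rfl

/-- master slice lemma -/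
lemma slice_mem_span (X : Set σ) (G : Set (MvPolynomial σ K))
    (hG : ∀ g ∈ G, ↑g.vars ⊆ X)
    {p : MvPolynomial σ K} (hp : p ∈ Ideal.span G) (e : σ →₀ ℕ)
    (he : ∀ i ∈ (X : Set σ), e i = 0) :
    ∃ q ∈ Ideal.span G, ∀ m : σ →₀ ℕ,
      ((∀ i ∉ X, m i = 0) → coeff m q = coeff (m + e) p) ∧
      (¬ (∀ i ∉ X, m i = 0) → coeff m q = 0) := by
  classical
  induction hp using Submodule.span_induction generalizing e with
  | mem g hg =>
      have hvars : ∀ d ∈ g.support, ∀ i, d i ≠ 0 → i ∈ X := by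
        intro d hd i hi
        exact hG g hg (mem_vars i |>.2 ⟨d, hd, Finsupp.mem_support_iff.2 hi⟩)
      by_cases he0 : e = 0
      · refine ⟨g, Ideal.subset_span hg, fun m => ⟨fun _ => by simp [he0], fun hm => ?_⟩⟩
        by_contra hc
        push_neg at hm
        obtain ⟨i, hiX, hine⟩ := hm
        exact hiX (hvars m (mem_support_iff.2 hc) i hine)
      · refine ⟨0, Ideal.zero_mem _, fun m => ⟨fun _ => ?_, fun _ => by simp⟩⟩
        obtain ⟨i, hie⟩ : ∃ i, e i ≠ 0 := by
          by_contra hc; push_neg at hc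
          exact he0 (Finsupp.ext hc)
        have hiX : i ∉ X := fun h => hie (he i h)
        simp only [coeff_zero]
        by_contra hc
        have : (m + e) i ≠ 0 := by
          simp only [Finsupp.add_apply]; omega
        exact hiX (hvars (m + e) (mem_support_iff.2 fun h => hc h.symm) i this)
  | zero => exact ⟨0, Ideal.zero_mem _, fun m => by simp⟩
  | add x y hx hy ihx ihy =>
      obtain ⟨qx, hqx, hsx⟩ := ihx e he
      obtain ⟨qy, hqy, hsy⟩ := ihy e he
      refine ⟨qx + qy, Ideal.add_mem _ hqx hqy, fun m => ⟨fun hm => ?_, fun hm => ?_⟩⟩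
      · simp [coeff_add, (hsx m).1 hm, (hsy m).1 hm]
      · simp [coeff_add, (hsx m).2 hm, (hsy m).2 hm]
  | smul s x hx ih =>
      -- reduce to s a monomial
      have main : ∀ s : MvPolynomial σ K, ∃ q ∈ Ideal.span G, ∀ m : σ →₀ ℕ,
          ((∀ i ∉ X, m i = 0) → coeff m q = coeff (m + e) (s * x)) ∧
          (¬ (∀ i ∉ X, m i = 0) → coeff m q = 0) := by
        intro s
        induction s using MvPolynomial.induction_on' with
        | add s₁ s₂ ih₁ ih₂ =>
            obtain ⟨q₁, hq₁, hs₁⟩ := ih₁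
            obtain ⟨q₂, hq₂, hs₂⟩ := ih₂
            refine ⟨q₁ + q₂, Ideal.add_mem _ hq₁ hq₂, fun m => ⟨fun hm => ?_, fun hm => ?_⟩⟩
            · simp [add_mul, coeff_add, (hs₁ m).1 hm, (hs₂ m).1 hm]
            · simp [coeff_add, (hs₁ m).2 hm, (hs₂ m).2 hm]
        | monomial d c =>
            set dX := d.filter (· ∈ X) with hdX
            set dXc := d.filter (fun i => i ∉ X) with hdXc
            have hdXa : ∀ i, dX i = if i ∈ X then d i else 0 := by
              intro i
              simp [hdX, Finsupp.filter_apply]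
            have hdXca : ∀ i, dXc i = if i ∈ X then 0 else d i := by
              intro i
              by_cases h : i ∈ X <;> simp [hdXc, Finsupp.filter_apply, h]
            by_cases hle : dXc ≤ e
            · have he' : ∀ i ∈ (X : Set σ), (e - dXc) i = 0 := by
                intro i hi
                simp [Finsupp.tsub_apply, he i hi]
              obtain ⟨q', hq', hs'⟩ := ih (e - dXc) he'
              refine ⟨monomial dX c * q', Ideal.mul_mem_left _ _ hq', fun m => ⟨fun hm => ?_, fun hm => ?_⟩⟩
              · rw [coeff_monomial_mul', coeff_monomial_mul']
                have hXle : dX ≤ m ↔ d ≤ m + e := by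
                  constructor
                  · intro h i
                    have h1 := h i
                    have h2 := hle i
                    have := hdXa i; have := hdXca i
                    simp only [Finsupp.add_apply]
                    by_cases hi : i ∈ X
                    · have : dX i = d i := by rw [hdXa i, if_pos hi]
                      omega
                    · have : dXc i = d i := by rw [hdXca i, if_neg hi]
                      omega
                  · intro h i
                    have h1 := h i
                    simp only [Finsupp.add_apply] at h1
                    by_cases hi : i ∈ X
                    · have : dX i = d i := by rw [hdXa i, if_pos hi]
                      have := he i hi
                      omega
                    · have : dX i = 0 := by rw [hdXa i, if_neg hi]
                      omega
                by_cases hc2 : dX ≤ m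
                · rw [if_pos hc2, if_pos (hXle.1 hc2)]
                  have hm' : ∀ i ∉ X, (m - dX) i = 0 := by
                    intro i hi
                    have : dX i = 0 := by rw [hdXa i, if_neg hi]
                    simp [Finsupp.tsub_apply, this, hm i hi]
                  rw [(hs' (m - dX)).1 hm']
                  have hidx : (m - dX) + (e - dXc) = m + e - d := by
                    ext i
                    simp only [Finsupp.add_apply, Finsupp.tsub_apply]
                    have h1 := hc2 i
                    have h2 := hle i
                    by_cases hi : i ∈ X
                    · have e1 : dX i = d i := by rw [hdXa i, if_pos hi]
                      have e2 : dXc i = 0 := by rw [hdXca i, if_pos hi]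
                      have := he i hi
                      omega
                    · have e1 : dX i = 0 := by rw [hdXa i, if_neg hi]
                      have e2 : dXc i = d i := by rw [hdXca i, if_neg hi]
                      have := hm i hi
                      omega
                  rw [hidx]
                · rw [if_neg hc2, if_neg (fun h => hc2 (hXle.2 h))]
              · rw [coeff_monomial_mul']
                by_cases hc2 : dX ≤ m
                · rw [if_pos hc2]
                  push_neg at hm
                  obtain ⟨i, hiX, hine⟩ := hm
                  have hm' : ¬ (∀ i ∉ X, (m - dX) i = 0) := by
                    push_neg
                    refine ⟨i, hiX, ?_⟩
                    have : dX i = 0 := by rw [hdXa i, if_neg hiX]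
                    simp [Finsupp.tsub_apply, this, hine]
                  rw [(hs' (m - dX)).2 hm', mul_zero]
                · rw [if_neg hc2]
            · refine ⟨0, Ideal.zero_mem _, fun m => ⟨fun hm => ?_, fun _ => by simp⟩⟩
              rw [coeff_zero, coeff_monomial_mul', if_neg, eq_comm]
              intro h
              apply hle
              intro i
              have h1 := h i
              simp only [Finsupp.add_apply] at h1
              by_cases hi : i ∈ X
              · have : dXc i = 0 := by rw [hdXca i, if_pos hi]
                omega
              · have : dXc i = d i := by rw [hdXca i, if_neg hi]
                have := hm i hi
                omega
      obtain ⟨q, hq, hs⟩ := main s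
      exact ⟨q, hq, fun m => ⟨fun hm => by rw [(hs m).1 hm]; rfl, (hs m).2⟩⟩

open Classical in
lemma key_slice (X : Set σ) (G : Set (MvPolynomial σ K)) (hG : ∀ g ∈ G, ↑g.vars ⊆ X)
    {p : MvPolynomial σ K} (hp : p ∈ Ideal.span G) (hp0 : p ≠ 0) :
    ∃ q ∈ Ideal.span G, q ≠ 0 ∧
      leadDegree mo q = (leadDegree mo p).filter (fun i => i ∈ X) ∧
      coeff (leadDegree mo q) q = coeff (leadDegree mo p) p := by
  classical
  set δ := leadDegree mo p with hδ
  set e := δ.filter (fun i => i ∉ X) with hee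
  have he : ∀ i ∈ X, e i = 0 := fun i hi => by
    simp [hee, Finsupp.filter_apply, hi]
  obtain ⟨q, hq, hs⟩ := slice_mem_span X G hG hp e he
  set δX := δ.filter (fun i => i ∈ X) with hdd
  have hδX : ∀ i ∉ X, δX i = 0 := fun i hi => by
    simp [hdd, Finsupp.filter_apply, hi]
  have hsplit : δX + e = δ := by
    ext i
    simp only [Finsupp.add_apply, hdd, hee, Finsupp.filter_apply]
    by_cases hi : i ∈ X <;> simp [hi]
  have hcoeff : coeff δX q = coeff δ p := by
    rw [(hs δX).1 hδX, hsplit]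
  have hc0 : coeff δX q ≠ 0 := by
    rw [hcoeff]; exact coeff_leadDegree_ne_zero mo hp0
  have hq0 : q ≠ 0 := fun h => hc0 (by simp [h])
  have hdeg : leadDegree mo q = δX := by
    apply leadDegree_eq_of mo hc0
    intro d hd
    by_cases hdX : ∀ i ∉ X, d i = 0
    · rw [(hs d).1 hdX] at hd
      have h1 : mo.toSyn (d + e) ≤ mo.toSyn δ := le_toSyn_leadDegree mo hd
      rw [← hsplit, map_add, map_add] at h1
      exact le_of_add_le_add_right h1
    · exact absurd ((hs d).2 hdX) hd
  exact ⟨q, hq, hq0, by rw [hdeg], by rw [hdeg, hcoeff]⟩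

lemma keyClaim (r : ℕ) (Xs : Fin r → Set σ) (hdisj : Pairwise (Function.onFun Disjoint Xs))
    (I : Fin r → Ideal (MvPolynomial σ K))
    (hI : ∀ j, ∃ G : Set (MvPolynomial σ K),
      (∀ g ∈ G, ↑g.vars ⊆ Xs j) ∧ I j = Ideal.span G)
    {f : MvPolynomial σ K} (hf : f ∈ ⨆ j, I j) (hf0 : f ≠ 0) :
    ∃ j, ∃ g ∈ I j, g ≠ 0 ∧ leadDegree mo g ≤ leadDegree mo f := by
  classical
  obtain ⟨v, hv, hvsum⟩ := (Submodule.mem_iSup_iff_exists_finsupp _ f).1 hf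
  set Reps : Set (Fin r → MvPolynomial σ K) :=
    {g | (∀ j, g j ∈ I j) ∧ ∑ j, g j = f} with hReps
  have hRne : Reps.Nonempty := by
    refine ⟨v, hv, ?_⟩
    rw [← hvsum]
    exact (Finsupp.sum_fintype v (fun _ x => x) (fun _ => rfl)).symm
  set μ : (Fin r → MvPolynomial σ K) → mo.syn :=
    fun g => ∑ j, mo.toSyn (leadDegree mo (g j)) with hμ
  have hwf : WellFounded ((· < ·) : mo.syn → mo.syn → Prop) := mo.wf.wf
  obtain ⟨m0, hm0mem, hm0min⟩ := hwf.has_min (μ '' Reps) (hRne.image μ)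
  obtain ⟨g, hgR, hgm⟩ := hm0mem
  obtain ⟨hgI, hgsum⟩ := hgR
  have hnz : ∃ j, g j ≠ 0 := by
    by_contra hc; push_neg at hc
    apply hf0; rw [← hgsum]
    exact Finset.sum_eq_zero (fun j _ => hc j)
  set N : Finset (Fin r) := Finset.univ.filter (fun j => g j ≠ 0) with hN
  have hNne : N.Nonempty := by
    obtain ⟨j, hj⟩ := hnz; exact ⟨j, by simp [hN, hj]⟩
  obtain ⟨j₀, hj₀N, hj₀max⟩ :=
    Finset.exists_max_image N (fun j => mo.toSyn (leadDegree mo (g j))) hNne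
  have hgj₀ : g j₀ ≠ 0 := (Finset.mem_filter.1 hj₀N).2
  set δ := leadDegree mo (g j₀) with hδdef
  have hmax : ∀ kk, mo.toSyn (leadDegree mo (g kk)) ≤ mo.toSyn δ := by
    intro kk
    by_cases hk : g kk = 0
    · exact toSyn_leadDegree_zero_le mo hk
    · exact hj₀max kk (Finset.mem_filter.2 ⟨Finset.mem_univ _, hk⟩)
  have hfT : mo.toSyn (leadDegree mo f) ≤ mo.toSyn δ := by
    apply leadDegree_le_of
    intro d hd
    rw [← hgsum] at hd
    have hex : ∃ j, coeff d (g j) ≠ 0 := by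
      by_contra hc; push_neg at hc
      apply hd
      rw [← MvPolynomial.coeff_zero d]
      rw [coeff_sum]
      simp only [MvPolynomial.coeff_zero]
      exact Finset.sum_eq_zero fun j _ => hc j
    obtain ⟨j, hj⟩ := hex
    exact le_trans (le_toSyn_leadDegree mo hj) (hmax j)
  rcases eq_or_lt_of_le hfT with heq | hlt
  · -- case: the max degree is the degree of f
    have hδf : leadDegree mo f = δ := mo.toSyn.injective heq
    obtain ⟨G, hG, hIG⟩ := hI j₀
    obtain ⟨q, hq, hq0, hqdeg, -⟩ :=
      key_slice mo (Xs j₀) G hG (hIG ▸ hgI j₀) hgj₀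
    refine ⟨j₀, q, hIG ▸ hq, hq0, ?_⟩
    rw [hqdeg, hδf]
    intro i
    rw [Finsupp.filter_apply]
    split
    · exact le_rfl
    · exact Nat.zero_le _
  · -- cancellation case: contradiction with minimality
    exfalso
    have hδ0 : δ ≠ 0 := by
      intro h
      rw [h, map_zero] at hlt
      exact absurd hlt (not_lt.2 (zero_le_syn mo _))
    have hcδf : coeff δ f = 0 := coeff_eq_zero_of_lt mo hlt
    have hsumδ : ∑ j, coeff δ (g j) = 0 := by
      rw [← coeff_sum, hgsum, hcδf]
    have hcj₀ : coeff δ (g j₀) ≠ 0 := coeff_leadDegree_ne_zero mo hgj₀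
    have hkex : ∃ kk, kk ≠ j₀ ∧ coeff δ (g kk) ≠ 0 := by
      by_contra hc; push_neg at hc
      have := Finset.sum_eq_single (s := Finset.univ)
        (f := fun j => coeff δ (g j)) j₀
        (fun kk _ hkne => hc kk hkne) (by simp)
      rw [this] at hsumδ
      exact hcj₀ hsumδ
    obtain ⟨k, hkne, hck⟩ := hkex
    have hgk0 : g k ≠ 0 := fun h => hck (by simp [h])
    have hdegk : leadDegree mo (g k) = δ := by
      apply mo.toSyn.injective
      exact le_antisymm (hmax k) (le_toSyn_leadDegree mo hck)
    obtain ⟨G₁, hG₁, hIG₁⟩ := hI j₀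
    obtain ⟨G₂, hG₂, hIG₂⟩ := hI k
    obtain ⟨q₁, hq₁span, hq₁0, hq₁deg, hq₁c⟩ :=
      key_slice mo (Xs j₀) G₁ hG₁ (hIG₁ ▸ hgI j₀) hgj₀
    obtain ⟨q₂, hq₂span, hq₂0, hq₂deg, hq₂c⟩ :=
      key_slice mo (Xs k) G₂ hG₂ (hIG₂ ▸ hgI k) hgk0
    have hq₁I : q₁ ∈ I j₀ := hIG₁ ▸ hq₁span
    have hq₂I : q₂ ∈ I k := hIG₂ ▸ hq₂span
    set δ₁ := δ.filter (fun i => i ∈ Xs j₀) with hδ₁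
    set δ₂ := δ.filter (fun i => i ∈ Xs k) with hδ₂
    have hq₁deg' : leadDegree mo q₁ = δ₁ := hq₁deg
    have hq₂deg' : leadDegree mo q₂ = δ₂ := by rw [hq₂deg, hdegk]
    set c := coeff δ (g j₀) with hc
    set c' := coeff δ (g k) with hc'
    have hq₁c' : coeff δ₁ q₁ = c := by rw [← hq₁deg']; exact hq₁c
    have hq₂c' : coeff δ₂ q₂ = c' := by
      rw [← hq₂deg', hq₂c, hdegk]
    have hdisj' : Disjoint (Xs j₀) (Xs k) := hdisj (Ne.symm hkne)
    have hdle : δ₁ + δ₂ ≤ δ := by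
      intro i
      simp only [Finsupp.add_apply, hδ₁, hδ₂, Finsupp.filter_apply]
      by_cases h1 : i ∈ Xs j₀
      · have h2 : i ∉ Xs k := fun h => (Set.disjoint_left.1 hdisj' h1) h
        simp [h1, h2]
      · by_cases h2 : i ∈ Xs k <;> simp [h1, h2]
    set w := δ - (δ₁ + δ₂) with hwdef
    have hw : w + (δ₁ + δ₂) = δ := tsub_add_cancel_of_le hdle
    set t := monomial w (c'⁻¹) * (q₁ * q₂) with ht
    have htI₁ : t ∈ I j₀ :=
      Ideal.mul_mem_left _ _ (Ideal.mul_mem_right _ _ hq₁I)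
    have htI₂ : t ∈ I k :=
      Ideal.mul_mem_left _ _ (Ideal.mul_mem_left _ _ hq₂I)
    have hq12deg : leadDegree mo (q₁ * q₂) = δ₁ + δ₂ := by
      rw [leadDegree_mul mo hq₁0 hq₂0, hq₁deg', hq₂deg']
    have hc12 : coeff (δ₁ + δ₂) (q₁ * q₂) = c * c' := by
      have h := coeff_mul_leadDegree mo q₁ q₂
      rw [hq₁deg', hq₂deg', hq₁c', hq₂c'] at h
      exact h
    have hq120 : q₁ * q₂ ≠ 0 := by
      intro h
      rw [h, MvPolynomial.coeff_zero] at hc12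
      exact (mul_ne_zero hcj₀ hck) hc12.symm
    have hmon0 : (monomial w (c'⁻¹) : MvPolynomial σ K) ≠ 0 := by
      rw [Ne, monomial_eq_zero]
      exact inv_ne_zero hck
    have hdegmon : leadDegree mo (monomial w (c'⁻¹) : MvPolynomial σ K) = w := by
      apply leadDegree_eq_of
      · rw [coeff_monomial]
        simp [inv_ne_zero hck]
      · intro d hd
        rw [coeff_monomial] at hd
        by_cases hdw : w = d
        · exact le_of_eq (congrArg _ hdw.symm)
        · simp [hdw] at hd
    have hdegt : leadDegree mo t = δ := by
      rw [ht, leadDegree_mul mo hmon0 hq120, hdegmon, hq12deg, hw]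
    have hct : coeff δ t = c := by
      rw [ht, ← hw, coeff_monomial_mul, hc12]
      rw [mul_comm c c', ← mul_assoc, inv_mul_cancel₀ hck, one_mul]
    -- the new representation
    set g' : Fin r → MvPolynomial σ K :=
      fun j => if j = j₀ then g j₀ - t else if j = k then g k + t else g j with hg'
    have hg'I : ∀ j, g' j ∈ I j := by
      intro j
      simp only [hg']
      by_cases h1 : j = j₀
      · subst h1; rw [if_pos rfl]
        exact Ideal.sub_mem _ (hgI j) htI₁
      · rw [if_neg h1]
        by_cases h2 : j = k
        · subst h2; rw [if_pos rfl]
          exact Ideal.add_mem _ (hgI j) htI₂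
        · rw [if_neg h2]; exact hgI j
    have hg'sum : ∑ j, g' j = f := by
      rw [← hgsum]
      have hsplit : ∀ j, g' j
          = g j + ((if j = j₀ then -t else 0) + (if j = k then t else 0)) := by
        intro j
        simp only [hg']
        by_cases h1 : j = j₀
        · subst h1
          rw [if_pos rfl, if_pos rfl, if_neg (fun h => hkne h.symm)]
          ring
        · rw [if_neg h1, if_neg h1]
          by_cases h2 : j = k
          · subst h2; rw [if_pos rfl, if_pos rfl]; ring
          · rw [if_neg h2, if_neg h2]; ring
      rw [Finset.sum_congr rfl (fun j _ => hsplit j), Finset.sum_add_distrib,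
        Finset.sum_add_distrib]
      rw [Finset.sum_ite_eq' Finset.univ j₀ (fun _ => -t),
        Finset.sum_ite_eq' Finset.univ k (fun _ => t)]
      simp
    have hj₀lt : mo.toSyn (leadDegree mo (g j₀ - t)) < mo.toSyn δ :=
      leadDegree_sub_lt mo hδ0 (le_of_eq rfl)
        (le_of_eq (congrArg _ hdegt)) (by rw [hct, hc])
    have hklt : mo.toSyn (leadDegree mo (g k + t)) ≤ mo.toSyn δ := by
      apply leadDegree_le_of
      intro d hd
      rw [coeff_add] at hd
      have hor : coeff d (g k) ≠ 0 ∨ coeff d t ≠ 0 := by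
        by_contra hcc; push_neg at hcc
        rw [hcc.1, hcc.2, add_zero] at hd
        exact hd rfl
      rcases hor with h | h
      · exact le_trans (le_toSyn_leadDegree mo h) (hmax k)
      · exact le_trans (le_toSyn_leadDegree mo h) (le_of_eq (congrArg _ hdegt))
    have hμlt : μ g' < μ g := by
      apply Finset.sum_lt_sum
      · intro j _
        simp only [hg']
        by_cases h1 : j = j₀
        · subst h1; rw [if_pos rfl]
          exact le_of_lt (lt_of_lt_of_le hj₀lt (le_of_eq rfl))
        · rw [if_neg h1]
          by_cases h2 : j = k
          · subst h2; rw [if_pos rfl]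
            exact le_trans hklt (le_of_eq (congrArg _ hdegk.symm))
          · rw [if_neg h2]
      · refine ⟨j₀, Finset.mem_univ _, ?_⟩
        simp only [hg', if_pos rfl]
        exact hj₀lt
    exact hm0min (μ g') ⟨g', ⟨hg'I, hg'sum⟩, rfl⟩ (hgm ▸ hμlt)

end Lemmas

/-- If `I₁, …, I_r` are ideals generated by polynomials in pairwise disjoint sets of
variables, then `in_<(I₁ + ⋯ + I_r) = in_<(I₁) + ⋯ + in_<(I_r)`. -/
theorem stmt15 (K σ : Type) [Field K] (mo : MonomialOrder σ) (r : ℕ)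
    (Xs : Fin r → Set σ) (hdisj : Pairwise (Function.onFun Disjoint Xs))
    (I : Fin r → Ideal (MvPolynomial σ K))
    (hI : ∀ j, ∃ G : Set (MvPolynomial σ K),
      (∀ g ∈ G, ↑g.vars ⊆ Xs j) ∧ I j = Ideal.span G) :
    initialIdeal mo (⨆ j, I j) = ⨆ j, initialIdeal mo (I j) := by
  apply le_antisymm
  · rw [initialIdeal, Ideal.span_le]
    rintro x ⟨f, hf, hf0, rfl⟩
    obtain ⟨j, g, hgI, hg0, hgle⟩ := keyClaim mo r Xs hdisj I hI hf hf0
    have hmem : (monomial (leadDegree mo g) 1 : MvPolynomial σ K)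
        ∈ initialIdeal mo (I j) :=
      Ideal.subset_span ⟨g, hgI, hg0, rfl⟩
    have heq : (monomial (leadDegree mo f) 1 : MvPolynomial σ K)
        = monomial (leadDegree mo f - leadDegree mo g) 1
          * monomial (leadDegree mo g) 1 := by
      rw [monomial_mul, one_mul, tsub_add_cancel_of_le hgle]
    rw [SetLike.mem_coe, heq]
    exact Ideal.mul_mem_left _ _
      ((le_iSup (fun j => initialIdeal mo (I j)) j) hmem)
  · apply iSup_le
    intro j
    apply Ideal.span_mono
    rintro x ⟨f, hf, hf0, rfl⟩
    exact ⟨f, (le_iSup I j) hf, hf0, rfl⟩
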